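/- With R(c_1,…,c_K) as in the HBCT end-to-end bit delivery formula, ∂R/∂c_1 has the same sign as p_1 B_1 − ζ P_t h_1 (Ω_1 − B_1); in particular R is increasing in c_1 if Ω_1 < B_1·(1 + p_1/(ζ P_t h_1)) and decreasing in c_1 if Ω_1 > B_1·(1 + p_1/(ζ P_t h_1)). -/

import Mathlib

open Finset

set_option maxHeartbeats 1000000 in
/-- For the source hop (hop 1, indexed `⟨0,hK⟩`), the partial derivative of the HBCT
end-to-end bit delivery `R(c) = T / ((1−c_1)p_1/(ζ P_t h_1 X_1(c_1)) + Σ_i 1/X_i(c_i))`,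
`X_i(c_i) = B_i + (1−c_i)(Ω_i − B_i)`, with respect to `c_1` has the same sign as
`p_1 B_1 − ζ P_t h_1 (Ω_1 − B_1)`; in particular `R` is increasing in `c_1` iff
`Ω_1 < B_1 (1 + p_1/(ζ P_t h_1))` and decreasing iff the reverse strict inequality holds. -/
theorem stmt8 (K : ℕ) (hK : 0 < K) (T p1 ζ Pt h1 : ℝ) (Ω B : Fin K → ℝ)
    (hT : 0 < T) (hp1 : 0 < p1) (hζ : 0 < ζ) (hPt : 0 < Pt) (hh1 : 0 < h1)
    (hΩ : ∀ k, 0 < Ω k) (hB : ∀ k, 0 < B k)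
    (c : Fin K → ℝ) (hc : ∀ k, c k ∈ Set.Icc (0 : ℝ) 1) :
    let X : (Fin K → ℝ) → Fin K → ℝ := fun c k => B k + (1 - c k) * (Ω k - B k)
    let R : (Fin K → ℝ) → ℝ := fun c =>
      T / ((1 - c ⟨0, hK⟩) * p1 / (ζ * Pt * h1 * X c ⟨0, hK⟩) + ∑ k, 1 / X c k)
    ∃ d : ℝ, HasDerivAt (fun t => R (Function.update c ⟨0, hK⟩ t)) d (c ⟨0, hK⟩) ∧
      (0 < p1 * B ⟨0, hK⟩ - ζ * Pt * h1 * (Ω ⟨0, hK⟩ - B ⟨0, hK⟩) → 0 < d) ∧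
      (p1 * B ⟨0, hK⟩ - ζ * Pt * h1 * (Ω ⟨0, hK⟩ - B ⟨0, hK⟩) < 0 → d < 0) ∧
      (p1 * B ⟨0, hK⟩ - ζ * Pt * h1 * (Ω ⟨0, hK⟩ - B ⟨0, hK⟩) = 0 → d = 0) ∧
      (Ω ⟨0, hK⟩ < B ⟨0, hK⟩ * (1 + p1 / (ζ * Pt * h1)) → 0 < d) ∧
      (B ⟨0, hK⟩ * (1 + p1 / (ζ * Pt * h1)) < Ω ⟨0, hK⟩ → d < 0) := by
  intro X R
  set i₀ : Fin K := ⟨0, hK⟩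
  set t₀ : ℝ := c i₀ with ht₀
  set a : ℝ := ζ * Pt * h1 with ha_def
  set b : ℝ := B i₀
  set w : ℝ := Ω i₀
  have ha : 0 < a := by positivity
  have hb : 0 < b := hB i₀
  have hw : 0 < w := hΩ i₀
  have hct : t₀ ∈ Set.Icc (0:ℝ) 1 := hc i₀
  set X1 : ℝ → ℝ := fun t => b + (1 - t) * (w - b) with hX1_def
  have hX1 : ∀ t, HasDerivAt X1 (b - w) t := by
    intro t
    have h := (((hasDerivAt_id t).const_sub 1).mul_const (w - b)).const_add b
    exact h.congr_deriv (by ring : -1 * (w - b) = b - w)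
  have hXpos : ∀ k, 0 < X c k := by
    intro k
    have h1 := (hc k).1
    have h2 := (hc k).2
    have hΩk := hΩ k; have hBk := hB k
    simp only [X]
    nlinarith [mul_nonneg (sub_nonneg.2 h2) hΩk.le, mul_nonneg h1 hBk.le]
  set x : ℝ := X1 t₀ with hx_def
  have hxval : x = b + (1 - t₀) * (w - b) := rfl
  have hxpos : 0 < x := by
    have h1 := hct.1; have h2 := hct.2
    rw [hxval]
    nlinarith [mul_nonneg (sub_nonneg.2 h2) hw.le, mul_nonneg h1 hb.le]
  have hxne : x ≠ 0 := ne_of_gt hxpos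
  have hane : a ≠ 0 := ne_of_gt ha
  have hax : a * x ≠ 0 := by positivity
  -- derivative of first term
  have hu : HasDerivAt (fun t => (1 - t) * p1) (-p1) t₀ := by
    simpa using ((hasDerivAt_id t₀).const_sub 1).mul_const p1
  have hv : HasDerivAt (fun t => a * X1 t) (a * (b - w)) t₀ := (hX1 t₀).const_mul a
  have hfirst := hu.div hv hax
  -- derivative of sum terms
  have hF : ∀ k, HasDerivAt
      (fun t => 1 / (B k + (1 - Function.update c i₀ t k) * (Ω k - B k)))
      (if k = i₀ then (w - b) / x ^ 2 else 0) t₀ := by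
    intro k
    by_cases hk : k = i₀
    · subst hk
      simp only [Function.update_self, if_pos rfl]
      have hd := (hasDerivAt_const t₀ (1:ℝ)).div (hX1 t₀) (ne_of_gt hxpos)
      have heq : (0 * X1 t₀ - 1 * (b - w)) / (X1 t₀) ^ 2 = (w - b) / x ^ 2 := by
        rw [← hx_def]; ring
      rw [heq] at hd
      exact hd
    · simp only [if_neg hk]
      have heq : (fun t => 1 / (B k + (1 - Function.update c i₀ t k) * (Ω k - B k)))
          = fun _ => 1 / (B k + (1 - c k) * (Ω k - B k)) := by
        funext t; rw [Function.update_of_ne hk]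
      rw [heq]
      exact hasDerivAt_const _ _
  have hsum := HasDerivAt.fun_sum (fun k (_ : k ∈ Finset.univ) => hF k)
  have hsval : (∑ k, if k = i₀ then (w - b) / x ^ 2 else 0) = (w - b) / x ^ 2 := by
    rw [Finset.sum_ite_eq' Finset.univ i₀ (fun _ => (w - b) / x ^ 2)]
    simp
  rw [hsval] at hsum
  set g : ℝ → ℝ := fun t => (1 - t) * p1 / (a * X1 t)
      + ∑ k, 1 / (B k + (1 - Function.update c i₀ t k) * (Ω k - B k)) with hg_def
  set g' : ℝ := (-p1 * (a * X1 t₀) - (1 - t₀) * p1 * (a * (b - w))) / (a * X1 t₀) ^ 2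
      + (w - b) / x ^ 2 with hg'_def
  have hg : HasDerivAt g g' t₀ := hfirst.add hsum
  have hgval : g t₀ = (1 - t₀) * p1 / (a * x) + ∑ k, 1 / X c k := by
    simp only [hg_def, ht₀, Function.update_eq_self, hx_def, X]
  have hg0 : 0 < g t₀ := by
    rw [hgval]
    have hs : 0 < ∑ k, 1 / X c k :=
      Finset.sum_pos (fun k _ => one_div_pos.mpr (hXpos k)) ⟨i₀, Finset.mem_univ i₀⟩
    have h2 := hct.2
    have hfn : 0 ≤ (1 - t₀) * p1 / (a * x) := by
      apply div_nonneg _ (by positivity)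
      nlinarith
    linarith
  have hgne : g t₀ ≠ 0 := ne_of_gt hg0
  have hR : HasDerivAt (fun t => T / g t) ((0 * g t₀ - T * g') / g t₀ ^ 2) t₀ :=
    (hasDerivAt_const t₀ T).div hg hgne
  have hfun : (fun t => R (Function.update c i₀ t)) = fun t => T / g t := by
    funext t
    simp only [R, X, hg_def, i₀, b, w, Function.update_self, hX1_def, ha_def]
  -- sign analysis
  have hxX : X1 t₀ = x := rfl
  have hxne' : b + (1 - t₀) * (w - b) ≠ 0 := hxval ▸ hxne
  have hg's : g' = -((p1 * b - a * (w - b)) / (a * x ^ 2)) := by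
    rw [hg'_def, hxX, hxval]
    field_simp
    ring
  have hkey : (0 * g t₀ - T * g') / g t₀ ^ 2
      = (p1 * b - a * (w - b)) * (T / (a * x ^ 2 * g t₀ ^ 2)) := by
    rw [hg's]
    field_simp
    ring
  have hMpos : 0 < a * x ^ 2 * g t₀ ^ 2 :=
    mul_pos (mul_pos ha (pow_pos hxpos 2)) (pow_pos hg0 2)
  have hM : 0 < T / (a * x ^ 2 * g t₀ ^ 2) := div_pos hT hMpos
  have hmul : p1 / a * a = p1 := div_mul_cancel₀ p1 hane
  refine ⟨(0 * g t₀ - T * g') / g t₀ ^ 2, by rw [hfun]; exact hR, ?_, ?_, ?_, ?_, ?_⟩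
  · intro h; rw [hkey]; exact mul_pos h hM
  · intro h; rw [hkey]; exact mul_neg_of_neg_of_pos h hM
  · intro h; rw [hkey, h, zero_mul]
  · intro h
    have hpos : 0 < p1 * b - a * (w - b) := by nlinarith [mul_lt_mul_of_pos_left h ha, hmul]
    rw [hkey]; exact mul_pos hpos hM
  · intro h
    have hneg : p1 * b - a * (w - b) < 0 := by nlinarith [mul_lt_mul_of_pos_left h ha, hmul]
    rw [hkey]; exact mul_neg_of_neg_of_pos hneg hM
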